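/- Let m, n ≥ 1, let A, B be m×n matrices with entries in ℝ∞ = ℝ ∪ {+∞}, and let S ⊆ {1, …, n}. Then exactly one of the following two statements holds: (1) there exists x ∈ ℝ∞^n with A ⊙ x ≤ B ⊙ x such that x_i is finite for some i ∈ S; (2) there exists y ∈ ℝ∞^m with B^T ⊙ y < A^T ⊙ y such that the i-th coordinate of B^T ⊙ y is finite for every i ∈ S. -/

import Mathlib

/-- The min-plus matrix-vector product over `ℝ∞ = ℝ ∪ {+∞}`:
`(A ⊙ x)_i = min_j (A_{ij} + x_j)`. -/
noncomputable def minPlusMul {m n : ℕ} (A : Fin m → Fin n → WithTop ℝ)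
    (x : Fin n → WithTop ℝ) (i : Fin m) : WithTop ℝ :=
  Finset.univ.inf (fun j => A i j + x j)

/-- Strict inequality of vectors over `ℝ∞`: in every coordinate either both sides are
`+∞` or the strict inequality holds. -/
def ltVec {m : ℕ} (u v : Fin m → WithTop ℝ) : Prop :=
  ∀ i, (u i = ⊤ ∧ v i = ⊤) ∨ u i < v i

set_option linter.unusedSectionVars false
set_option linter.unnecessarySimpa false

open Finset

noncomputable section MPAux

/-- translate-and-truncate on `ℝ≥0∞`. -/
def trq (x : ENNReal) (w : ℝ) : ENNReal :=
  if x = ⊤ then ⊤ else ENNReal.ofReal (x.toReal + w)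

lemma trq_top (w : ℝ) : trq ⊤ w = ⊤ := by simp [trq]

lemma trq_ne_top {x : ENNReal} (hx : x ≠ ⊤) (w : ℝ) : trq x w ≠ ⊤ := by
  simp [trq, hx]

lemma trq_mono' {x y : ENNReal} (h : x ≤ y) (w : ℝ) : trq x w ≤ trq y w := by
  by_cases hy : y = ⊤
  · simp [hy, trq]
  · have hx : x ≠ ⊤ := fun hh => hy (top_le_iff.mp (hh ▸ h))
    simp only [trq, hx, hy, if_false]
    exact ENNReal.ofReal_le_ofReal (by
      have := ENNReal.toReal_mono hy h
      linarith)

/-- u1 : from `trq x w ≤ c`, `c ≠ ⊤`, derive finiteness and the real inequality. -/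
lemma trq_le_of_ne_top {x c : ENNReal} {w : ℝ} (hc : c ≠ ⊤) (h : trq x w ≤ c) :
    x ≠ ⊤ ∧ x.toReal + w ≤ c.toReal := by
  have hx : x ≠ ⊤ := by
    intro hh; rw [hh, trq_top] at h; exact hc (top_le_iff.mp h)
  refine ⟨hx, ?_⟩
  simp only [trq, hx, if_false] at h
  rcases le_or_gt (x.toReal + w) 0 with h0 | h0
  · have : (0:ℝ) ≤ c.toReal := ENNReal.toReal_nonneg
    linarith
  · exact (ENNReal.ofReal_le_iff_le_toReal hc).mp h

/-- u4-ish : from `ENNReal.ofReal θ < trq x w` with `x ≠ ⊤`, `0 ≤ θ`, get `θ < x.toReal + w`. -/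
lemma lt_trq {x : ENNReal} {θ w : ℝ} (hθ : 0 ≤ θ) (hx : x ≠ ⊤)
    (h : ENNReal.ofReal θ < trq x w) : θ < x.toReal + w := by
  simp only [trq, hx, if_false] at h
  exact (ENNReal.ofReal_lt_ofReal_iff_of_nonneg hθ).mp h

lemma trq_eq (x : ENNReal) (hx : x ≠ ⊤) (w : ℝ) : trq x w = ENNReal.ofReal (x.toReal + w) := by
  simp [trq, hx]

end MPAux

noncomputable section GameIter

variable {α β : Type*} [Fintype α] [Fintype β]

variable (mv : α → Finset β) (rp : β → Finset α) (c₁ : α → β → ℝ) (c₂ : β → α → ℝ)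

/-- the energy-game value iteration. -/
def FIt : ℕ → α → ENNReal
  | 0 => fun _ => 0
  | (t+1) => fun p => (mv p).sup fun q => (rp q).inf fun r => trq (FIt t r) (c₁ p q + c₂ q r)

lemma FIt_succ (t : ℕ) (p : α) :
    FIt mv rp c₁ c₂ (t+1) p
      = (mv p).sup fun q => (rp q).inf fun r => trq (FIt mv rp c₁ c₂ t r) (c₁ p q + c₂ q r) := rfl

lemma FIt_zero (p : α) : FIt mv rp c₁ c₂ 0 p = 0 := rfl

/-- limit value. -/
def MVal (p : α) : ENNReal := ⨆ t, FIt mv rp c₁ c₂ t p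

lemma FIt_mono : ∀ t, ∀ p, FIt mv rp c₁ c₂ t p ≤ FIt mv rp c₁ c₂ (t+1) p := by
  intro t
  induction t with
  | zero => intro p; exact zero_le
  | succ t ih =>
      intro p
      refine Finset.sup_mono_fun fun q hq => Finset.inf_mono_fun fun r hr => ?_
      exact trq_mono' (ih r) _

lemma FIt_mono_le {t t' : ℕ} (h : t ≤ t') (p : α) :
    FIt mv rp c₁ c₂ t p ≤ FIt mv rp c₁ c₂ t' p := by
  induction t' with
  | zero => simpa [Nat.le_zero.mp h]
  | succ t' ih =>
      rcases Nat.lt_or_ge t (t'+1) with hh | hh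
      · exact le_trans (ih (Nat.lt_succ_iff.mp hh)) (FIt_mono mv rp c₁ c₂ t' p)
      · have : t = t' + 1 := le_antisymm h hh
        simp [this]

lemma FIt_le_MVal (t : ℕ) (p : α) : FIt mv rp c₁ c₂ t p ≤ MVal mv rp c₁ c₂ p :=
  le_iSup (fun t => FIt mv rp c₁ c₂ t p) t

/-- frequent-value pigeonhole. -/
lemma exists_frequently {γ : Type*} [Fintype γ] [Nonempty γ] (u : ℕ → γ) :
    ∃ a, ∀ N, ∃ t ≥ N, u t = a := by
  by_contra hcon
  push_neg at hcon
  choose Nf hNf using hcon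
  set M := Finset.univ.sup Nf with hM
  exact hNf (u M) M (Finset.le_sup (Finset.mem_univ _)) rfl

end GameIter

noncomputable section GameIter2
variable {α β : Type*} [Fintype α] [Fintype β]
variable (mv : α → Finset β) (rp : β → Finset α) (c₁ : α → β → ℝ) (c₂ : β → α → ℝ)

/-- G2 : the pigeonhole fixed-point inequality at finite limit values. -/
lemma MVal_step {p : α} (hp : MVal mv rp c₁ c₂ p ≠ ⊤) {q : β} (hq : q ∈ mv p) :
    ∃ r ∈ rp q, MVal mv rp c₁ c₂ r ≠ ⊤ ∧
      (MVal mv rp c₁ c₂ r).toReal + (c₁ p q + c₂ q r) ≤ (MVal mv rp c₁ c₂ p).toReal := by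
  classical
  set M := MVal mv rp c₁ c₂ with hM
  -- for each t, the q-term at time t+1 is ≤ M p
  have hterm : ∀ t, ((rp q).inf fun r => trq (FIt mv rp c₁ c₂ t r) (c₁ p q + c₂ q r)) ≤ M p := by
    intro t
    refine le_trans ?_ (FIt_le_MVal mv rp c₁ c₂ (t+1) p)
    rw [FIt_succ]
    exact Finset.le_sup (f := fun q => (rp q).inf fun r =>
      trq (FIt mv rp c₁ c₂ t r) (c₁ p q + c₂ q r)) hq
  have hne : (rp q).Nonempty := by
    rcases Finset.eq_empty_or_nonempty (rp q) with he | hne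
    · exfalso; apply hp; have := hterm 0; rw [he] at this; simpa using top_le_iff.mp this
    · exact hne
  -- choose attaining r for each t
  have hch : ∀ t, ∃ r ∈ rp q, trq (FIt mv rp c₁ c₂ t r) (c₁ p q + c₂ q r) ≤ M p := by
    intro t
    obtain ⟨r, hr, he⟩ := Finset.exists_mem_eq_inf (rp q) hne
      (fun r => trq (FIt mv rp c₁ c₂ t r) (c₁ p q + c₂ q r))
    exact ⟨r, hr, he ▸ hterm t⟩
  choose rt hrt hrt2 using hch
  -- pigeonhole : some r recurs
  have : Nonempty {r // r ∈ rp q} := ⟨⟨rt 0, hrt 0⟩⟩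
  obtain ⟨⟨r, hr⟩, hfreq⟩ := exists_frequently (fun t => (⟨rt t, hrt t⟩ : {r // r ∈ rp q}))
  refine ⟨r, hr, ?_⟩
  have hall : ∀ t, trq (FIt mv rp c₁ c₂ t r) (c₁ p q + c₂ q r) ≤ M p := by
    intro t
    obtain ⟨t', ht', he⟩ := hfreq t
    have : rt t' = r := congrArg Subtype.val he
    calc trq (FIt mv rp c₁ c₂ t r) (c₁ p q + c₂ q r)
        ≤ trq (FIt mv rp c₁ c₂ t' r) (c₁ p q + c₂ q r) :=
          trq_mono' (FIt_mono_le mv rp c₁ c₂ ht' r) _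
      _ = trq (FIt mv rp c₁ c₂ t' (rt t')) (c₁ p q + c₂ q (rt t')) := by rw [this]
      _ ≤ M p := hrt2 t'
  have hallR : ∀ t, FIt mv rp c₁ c₂ t r ≤ ENNReal.ofReal ((M p).toReal - (c₁ p q + c₂ q r)) := by
    intro t
    obtain ⟨hfin, hle⟩ := trq_le_of_ne_top hp (hall t)
    calc FIt mv rp c₁ c₂ t r = ENNReal.ofReal ((FIt mv rp c₁ c₂ t r).toReal) :=
          (ENNReal.ofReal_toReal hfin).symm
      _ ≤ _ := ENNReal.ofReal_le_ofReal (by linarith)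
  have hMr : M r ≤ ENNReal.ofReal ((M p).toReal - (c₁ p q + c₂ q r)) := iSup_le hallR
  have hMrne : M r ≠ ⊤ := ne_top_of_le_ne_top ENNReal.ofReal_ne_top hMr
  refine ⟨hMrne, ?_⟩
  have h0 : (0:ℝ) ≤ (M p).toReal - (c₁ p q + c₂ q r) := by
    have := (trq_le_of_ne_top hp (hall 0)).2
    have h00 : (FIt mv rp c₁ c₂ 0 r).toReal = 0 := by simp [FIt]
    rw [h00] at this; linarith
  have := ENNReal.toReal_mono ENNReal.ofReal_ne_top hMr
  rw [ENNReal.toReal_ofReal h0] at this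
  linarith

/-- G3 : boundedness criterion. -/
lemma MVal_ne_top {p : α}
    (h : ∀ q ∈ mv p, ∃ r ∈ rp q, MVal mv rp c₁ c₂ r ≠ ⊤) : MVal mv rp c₁ c₂ p ≠ ⊤ := by
  classical
  choose rf hrf1 hrf2 using h
  set C : ENNReal := (mv p).sup (fun q => if hq : q ∈ mv p then
      trq (MVal mv rp c₁ c₂ (rf q hq)) (c₁ p q + c₂ q (rf q hq)) else 0) with hC
  have hCne : C ≠ ⊤ := by
    rw [← lt_top_iff_ne_top]
    rw [hC]
    refine Finset.sup_lt_iff (by simp) |>.mpr fun q hq => ?_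
    rw [dif_pos hq, lt_top_iff_ne_top]
    exact trq_ne_top (hrf2 q hq) _
  have hb : ∀ t, FIt mv rp c₁ c₂ t p ≤ C := by
    intro t
    cases t with
    | zero => simp [FIt]
    | succ t =>
        rw [FIt_succ]
        refine Finset.sup_le fun q hq => ?_
        refine le_trans (Finset.inf_le (hrf1 q hq)) ?_
        refine le_trans (trq_mono' (FIt_le_MVal mv rp c₁ c₂ t _) _) ?_
        refine le_trans (le_of_eq ?_) (Finset.le_sup hq)
        rw [dif_pos hq]
  exact ne_top_of_le_ne_top hCne (iSup_le hb)

/-- finiteness of all iterates under the reply-nonemptiness condition. -/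
lemma FIt_ne_top (hR : ∀ p, ∀ q ∈ mv p, (rp q).Nonempty) :
    ∀ t p, FIt mv rp c₁ c₂ t p ≠ ⊤ := by
  intro t
  induction t with
  | zero => intro p; simp [FIt]
  | succ t ih =>
      intro p
      rw [← lt_top_iff_ne_top, FIt_succ]
      refine Finset.sup_lt_iff (by simp) |>.mpr fun q hq => ?_
      obtain ⟨r, hr⟩ := hR p q hq
      refine lt_of_le_of_lt (Finset.inf_le hr) ?_
      rw [lt_top_iff_ne_top]
      exact trq_ne_top (ih r) _

end GameIter2

noncomputable section GameIter3
open Finset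
variable {α β : Type*} [Fintype α] [Fintype β]
variable (mv : α → Finset β) (rp : β → Finset α) (c₁ : α → β → ℝ) (c₂ : β → α → ℝ)

/-- a "good" move: nonempty replies, all leading to divergent positions. -/
def GoodMv (q : β) : Prop := (rp q).Nonempty ∧ ∀ r ∈ rp q, MVal mv rp c₁ c₂ r = ⊤

/-- G4 : the strict-potential extraction from divergence. -/
lemma MVal_divergence_cert (hR : ∀ p, ∀ q ∈ mv p, (rp q).Nonempty) :
    ∃ x : β → ℝ, ∀ q : β, GoodMv mv rp c₁ c₂ q →
      ∀ p ∈ rp q, ∃ q' ∈ mv p, GoodMv mv rp c₁ c₂ q' ∧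
        x q' - c₁ p q' ≤ x q + c₂ q p := by
  classical
  set M := MVal mv rp c₁ c₂ with hM
  set Λ : ENNReal := (Finset.univ.filter (fun p => M p ≠ ⊤)).sup M with hΛ
  have hΛne : Λ ≠ ⊤ := by
    rw [← lt_top_iff_ne_top, hΛ]
    refine Finset.sup_lt_iff (by simp) |>.mpr fun p hp => ?_
    rw [lt_top_iff_ne_top]; exact (Finset.mem_filter.mp hp).2
  set W1 : ℝ := ∑ pq : α × β, |c₁ pq.1 pq.2| with hW1
  set W2 : ℝ := ∑ qr : β × α, |c₂ qr.1 qr.2| with hW2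
  have hW1b : ∀ p q, |c₁ p q| ≤ W1 := fun p q =>
    Finset.single_le_sum (f := fun pq : α × β => |c₁ pq.1 pq.2|)
      (fun _ _ => abs_nonneg _) (Finset.mem_univ (p, q))
  have hW2b : ∀ q r, |c₂ q r| ≤ W2 := fun q r =>
    Finset.single_le_sum (f := fun qr : β × α => |c₂ qr.1 qr.2|)
      (fun _ _ => abs_nonneg _) (Finset.mem_univ (q, r))
  have hW1n : 0 ≤ W1 := Finset.sum_nonneg fun _ _ => abs_nonneg _
  have hW2n : 0 ≤ W2 := Finset.sum_nonneg fun _ _ => abs_nonneg _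
  set θ : ℝ := Λ.toReal + W1 + W2 + 1 with hθ
  have hθ0 : 0 ≤ θ := by
    have : (0:ℝ) ≤ Λ.toReal := ENNReal.toReal_nonneg
    rw [hθ]; linarith
  -- choose a uniform large time
  have hch : ∀ p, ∃ t, M p = ⊤ → ENNReal.ofReal θ < FIt mv rp c₁ c₂ t p := by
    intro p
    by_cases h : M p = ⊤
    · have : ENNReal.ofReal θ < ⨆ t, FIt mv rp c₁ c₂ t p := by
        rw [show (⨆ t, FIt mv rp c₁ c₂ t p) = ⊤ from h]
        exact ENNReal.ofReal_lt_top
      obtain ⟨t, ht⟩ := lt_iSup_iff.mp this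
      exact ⟨t, fun _ => ht⟩
    · exact ⟨0, fun hh => absurd hh h⟩
  choose tf htf using hch
  set t : ℕ := Finset.univ.sup tf with ht
  have hbig : ∀ p, M p = ⊤ → ENNReal.ofReal θ < FIt mv rp c₁ c₂ t p := by
    intro p hp
    exact lt_of_lt_of_le (htf p hp)
      (FIt_mono_le mv rp c₁ c₂ (Finset.le_sup (Finset.mem_univ p)) p)
  have hbig1 : ∀ p, M p = ⊤ → ENNReal.ofReal θ < FIt mv rp c₁ c₂ (t+1) p := fun p hp =>
    lt_of_lt_of_le (hbig p hp) (FIt_mono mv rp c₁ c₂ t p)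
  have hfin : ∀ t' p, FIt mv rp c₁ c₂ t' p ≠ ⊤ := FIt_ne_top mv rp c₁ c₂ hR
  -- the potential
  set s : β → ℝ := fun q => if h : (rp q).Nonempty then
      (rp q).inf' h (fun r => (FIt mv rp c₁ c₂ t r).toReal + c₂ q r) else 0 with hs
  refine ⟨fun q => - s q, ?_⟩
  rintro q ⟨hqne, hqD⟩ p hp
  have hMp : M p = ⊤ := hqD p hp
  -- the time-(t+1) value at p is the supremum; get the attaining move q*
  have hpos : (0:ENNReal) < FIt mv rp c₁ c₂ (t+1) p :=
    lt_of_le_of_lt zero_le (hbig1 p hMp)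
  have hmvne : (mv p).Nonempty := by
    rcases Finset.eq_empty_or_nonempty (mv p) with he | hne
    · exfalso
      have : FIt mv rp c₁ c₂ (t+1) p = 0 := by rw [FIt_succ, he]; simp
      rw [this] at hpos; exact lt_irrefl _ hpos
    · exact hne
  obtain ⟨q', hq'mem, hq'eq⟩ := by
    have := Finset.exists_mem_eq_sup (mv p) hmvne
      (fun q => (rp q).inf fun r => trq (FIt mv rp c₁ c₂ t r) (c₁ p q + c₂ q r))
    rw [← FIt_succ] at this
    exact this
  have hq'ne : (rp q').Nonempty := hR p q' hq'mem
  -- every reply r to q' has a large value at time t, hence diverges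
  have hrep : ∀ r ∈ rp q', ENNReal.ofReal θ < trq (FIt mv rp c₁ c₂ t r) (c₁ p q' + c₂ q' r) := by
    intro r hr
    refine lt_of_lt_of_le (hbig1 p hMp) ?_
    rw [hq'eq]
    exact Finset.inf_le hr
  have hq'good : GoodMv mv rp c₁ c₂ q' := by
    refine ⟨hq'ne, fun r hr => ?_⟩
    by_contra hMr
    have h1 : θ < (FIt mv rp c₁ c₂ t r).toReal + (c₁ p q' + c₂ q' r) :=
      lt_trq hθ0 (hfin t r) (hrep r hr)
    have h2 : (FIt mv rp c₁ c₂ t r).toReal ≤ Λ.toReal := by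
      refine ENNReal.toReal_mono hΛne ?_
      refine le_trans (FIt_le_MVal mv rp c₁ c₂ t r) ?_
      exact Finset.le_sup (Finset.mem_filter.mpr ⟨Finset.mem_univ r, hMr⟩)
    have h3 := hW1b p q'
    have h4 := hW2b q' r
    rw [hθ] at h1
    have := abs_le.mp h3
    have := abs_le.mp h4
    linarith [abs_le.mp h3, abs_le.mp h4]
  refine ⟨q', hq'mem, hq'good, ?_⟩
  -- the attaining reply for s q'
  obtain ⟨r', hr'mem, hr'eq⟩ := Finset.exists_mem_eq_inf' hq'ne
    (fun r => (FIt mv rp c₁ c₂ t r).toReal + c₂ q' r)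
  have hsq' : s q' = (FIt mv rp c₁ c₂ t r').toReal + c₂ q' r' := by
    rw [hs]; simp only [dif_pos hq'ne]; exact hr'eq
  set z : ℝ := s q' + c₁ p q' with hz
  have hle : FIt mv rp c₁ c₂ (t+1) p ≤ ENNReal.ofReal z := by
    rw [hq'eq]
    refine le_trans (Finset.inf_le hr'mem) ?_
    rw [trq_eq _ (hfin t r'), hz, hsq']
    exact ENNReal.ofReal_le_ofReal (by ring_nf; exact le_refl _)
  have hθz : θ < z := by
    have := lt_of_lt_of_le (hbig1 p hMp) hle
    exact (ENNReal.ofReal_lt_ofReal_iff_of_nonneg hθ0).mp this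
  have hz0 : 0 ≤ z := le_trans hθ0 (le_of_lt hθz)
  have hfp : (FIt mv rp c₁ c₂ t p).toReal ≤ z := by
    have h1 : FIt mv rp c₁ c₂ t p ≤ ENNReal.ofReal z :=
      le_trans (FIt_mono mv rp c₁ c₂ t p) hle
    have := ENNReal.toReal_mono ENNReal.ofReal_ne_top h1
    rwa [ENNReal.toReal_ofReal hz0] at this
  have hsq : s q ≤ (FIt mv rp c₁ c₂ t p).toReal + c₂ q p := by
    rw [hs]; simp only [dif_pos hqne]
    exact Finset.inf'_le _ hp
  rw [hz] at hfp
  show -s q' - c₁ p q' ≤ -s q + c₂ q p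
  linarith

end GameIter3

section FM
open Finset
variable {V : Type*} [Fintype V] [DecidableEq V]

/-- a difference constraint `(a, b, c, k)` means `x b ≤ x a + c + k·ε`. -/
def FMSat (x : V → ℝ) (ε : ℝ) (L : List (V × V × ℝ × ℕ)) : Prop :=
  ∀ c ∈ L, x c.2.1 ≤ x c.1 + c.2.2.1 + c.2.2.2 * ε

/-- vertices occurring in the system. -/
def FMocc (L : List (V × V × ℝ × ℕ)) : Finset V :=
  Finset.univ.filter (fun v => ∃ c ∈ L, c.1 = v ∨ c.2.1 = v)

/-- eliminate vertex `v`. -/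
def FMelim (v : V) (L : List (V × V × ℝ × ℕ)) : List (V × V × ℝ × ℕ) :=
  (L.filter (fun c => c.1 ≠ v ∧ c.2.1 ≠ v)) ++
  ((L.filter (fun c => c.1 ≠ v ∧ c.2.1 = v)).flatMap (fun cin =>
    (L.filter (fun c => c.1 = v ∧ c.2.1 ≠ v)).map (fun cout =>
      (cin.1, cout.2.1, cin.2.2.1 + cout.2.2.1, cin.2.2.2 + cout.2.2.2))))

lemma FMelim_occ {v : V} {L : List (V × V × ℝ × ℕ)} :
    FMocc (FMelim v L) ⊆ (FMocc L).erase v := by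
  intro u hu
  simp only [FMocc, Finset.mem_filter, Finset.mem_univ, true_and] at hu
  obtain ⟨c, hc, hor⟩ := hu
  simp only [FMelim, List.mem_append, List.mem_filter, List.mem_flatMap, List.mem_map] at hc
  rcases hc with ⟨hcL, hprop⟩ | ⟨cin, hcin, cout, hcout, hceq⟩
  · have h1 : c.1 ≠ v ∧ c.2.1 ≠ v := by
      simpa using hprop
    refine Finset.mem_erase.mpr ⟨?_, ?_⟩
    · rcases hor with h | h
      · exact h ▸ h1.1
      · exact h ▸ h1.2
    · simp only [FMocc, Finset.mem_filter, Finset.mem_univ, true_and]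
      exact ⟨c, hcL, hor⟩
  · have h1 : cin.1 ≠ v := by have := hcin.2; simp at this; exact this.1
    have h2 : cout.2.1 ≠ v := by have := hcout.2; simp at this; exact this.2
    subst hceq
    refine Finset.mem_erase.mpr ⟨?_, ?_⟩
    · rcases hor with h | h
      · exact h ▸ h1
      · exact h ▸ h2
    · simp only [FMocc, Finset.mem_filter, Finset.mem_univ, true_and]
      rcases hor with h | h
      · exact ⟨cin, hcin.1, Or.inl h⟩
      · exact ⟨cout, hcout.1, Or.inr h⟩


lemma FMelim_sound {v : V} {L : List (V × V × ℝ × ℕ)} {x : V → ℝ} {ε : ℝ}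
    (h : FMSat x ε L) : FMSat x ε (FMelim v L) := by
  intro c hc
  simp only [FMelim, List.mem_append, List.mem_filter, List.mem_flatMap, List.mem_map] at hc
  rcases hc with ⟨hcL, _⟩ | ⟨cin, hcin, cout, hcout, hceq⟩
  · exact h c hcL
  · have e1 : cin.2.1 = v := by have := hcin.2; simp at this; exact this.2
    have e2 : cout.1 = v := by have := hcout.2; simp at this; exact this.1
    have i1 := h cin hcin.1
    have i2 := h cout hcout.1
    rw [e1] at i1; rw [e2] at i2
    subst hceq
    simp only
    push_cast
    nlinarith [i1, i2]

lemma FMelim_complete {v : V} {L : List (V × V × ℝ × ℕ)} {x : V → ℝ} {ε : ℝ}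
    (hloops : ∀ c ∈ L, c.1 = v → c.2.1 = v → 0 ≤ c.2.2.1 + c.2.2.2 * ε)
    (h : FMSat x ε (FMelim v L)) : ∃ x', FMSat x' ε L := by
  classical
  set ins : List (V × V × ℝ × ℕ) := L.filter (fun c => c.1 ≠ v ∧ c.2.1 = v) with hins
  set outs : List (V × V × ℝ × ℕ) := L.filter (fun c => c.1 = v ∧ c.2.1 ≠ v) with houts
  set insF := ins.toFinset with hinsF
  set outsF := outs.toFinset with houtsF
  set mval : ℝ :=
    if h1 : insF.Nonempty then insF.inf' h1 (fun c => x c.1 + c.2.2.1 + c.2.2.2 * ε)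
    else if h2 : outsF.Nonempty then outsF.sup' h2 (fun c => x c.2.1 - c.2.2.1 - c.2.2.2 * ε)
    else 0 with hmval
  refine ⟨Function.update x v mval, ?_⟩
  intro c hc
  by_cases ha : c.1 = v <;> by_cases hb : c.2.1 = v
  · -- loop
    rw [ha, hb]
    simp only [Function.update_self]
    have := hloops c hc ha hb
    linarith
  · -- out-edge : c.1 = v, need  x c.2.1 ≤ mval + ...
    have hcout : c ∈ outsF := by
      rw [houtsF, List.mem_toFinset, houts, List.mem_filter]
      exact ⟨hc, by simp [ha, hb]⟩
    rw [ha]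
    rw [Function.update_self, Function.update_of_ne hb]
    by_cases h1 : insF.Nonempty
    · obtain ⟨cin, hcinmem, hcineq⟩ := Finset.exists_mem_eq_inf' h1
        (fun c => x c.1 + c.2.2.1 + c.2.2.2 * ε)
      have hmeq : mval = x cin.1 + cin.2.2.1 + cin.2.2.2 * ε := by
        rw [hmval, dif_pos h1, hcineq]
      have hcinL : cin ∈ ins := by rwa [← List.mem_toFinset]
      rw [hins, List.mem_filter] at hcinL
      have hcinp : cin.1 ≠ v ∧ cin.2.1 = v := by have := hcinL.2; simpa using this
      -- the combined constraint is in FMelim v L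
      have hcomb : (cin.1, c.2.1, cin.2.2.1 + c.2.2.1, cin.2.2.2 + c.2.2.2) ∈ FMelim v L := by
        simp only [FMelim, List.mem_append, List.mem_flatMap, List.mem_map]
        refine Or.inr ⟨cin, ?_, c, ?_, rfl⟩
        · rw [List.mem_filter]; exact ⟨hcinL.1, by simp [hcinp.1, hcinp.2]⟩
        · rw [List.mem_filter]; exact ⟨hc, by simp [ha, hb]⟩
      have := h _ hcomb
      simp only at this
      push_cast at this
      rw [hmeq]
      linarith
    · have h2 : outsF.Nonempty := ⟨c, hcout⟩
      have hmge : x c.2.1 - c.2.2.1 - c.2.2.2 * ε ≤ mval := by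
        rw [hmval, dif_neg h1, dif_pos h2]
        exact Finset.le_sup' (fun c => x c.2.1 - c.2.2.1 - c.2.2.2 * ε) hcout
      linarith
  · -- in-edge : c.2.1 = v
    have hcin : c ∈ insF := by
      rw [hinsF, List.mem_toFinset, hins, List.mem_filter]
      exact ⟨hc, by simp [ha, hb]⟩
    rw [hb, Function.update_self, Function.update_of_ne ha]
    have h1 : insF.Nonempty := ⟨c, hcin⟩
    have : mval ≤ x c.1 + c.2.2.1 + c.2.2.2 * ε := by
      rw [hmval, dif_pos h1]
      exact Finset.inf'_le _ hcin
    linarith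
  · -- untouched
    have hcL : c ∈ FMelim v L := by
      simp only [FMelim, List.mem_append]
      exact Or.inl (List.mem_filter.mpr ⟨hc, by simp [ha, hb]⟩)
    have := h c hcL
    rw [Function.update_of_ne ha, Function.update_of_ne hb]
    exact this

/-- the FM limit lemma. -/
lemma FM_limit (L : List (V × V × ℝ × ℕ))
    (h : ∀ ε > (0:ℝ), ∃ x : V → ℝ, FMSat x ε L) : ∃ x : V → ℝ, FMSat x 0 L := by
  classical
  suffices hgen : ∀ (N : ℕ) (L : List (V × V × ℝ × ℕ)), (FMocc L).card ≤ N →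
      (∀ ε > (0:ℝ), ∃ x : V → ℝ, FMSat x ε L) → ∃ x : V → ℝ, FMSat x 0 L by
    exact hgen (FMocc L).card L le_rfl h
  intro N
  induction N with
  | zero =>
      intro L hcard hfeas
      refine ⟨fun _ => 0, fun c hc => ?_⟩
      exfalso
      have : c.1 ∈ FMocc L := by
        simp only [FMocc, Finset.mem_filter, Finset.mem_univ, true_and]
        exact ⟨c, hc, Or.inl rfl⟩
      have := Finset.card_pos.mpr ⟨c.1, this⟩
      omega
  | succ N ih =>
      intro L hcard hfeas
      rcases L with _ | ⟨c₀, L'⟩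
      · exact ⟨fun _ => 0, fun c hc => absurd hc List.not_mem_nil⟩
      set LL := c₀ :: L' with hLL
      set v := c₀.1 with hv
      have hvocc : v ∈ FMocc LL := by
        simp only [FMocc, Finset.mem_filter, Finset.mem_univ, true_and]
        exact ⟨c₀, List.mem_cons_self, Or.inl rfl⟩
      -- loops at v are nonnegative in the limit
      have hloops0 : ∀ c ∈ LL, c.1 = v → c.2.1 = v → 0 ≤ c.2.2.1 + c.2.2.2 * (0:ℝ) := by
        intro c hc h1 h2
        simp only [mul_zero, add_zero]
        by_contra hneg
        push_neg at hneg
        set ε : ℝ := -c.2.2.1 / (c.2.2.2 + 1) with hε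
        have hεpos : 0 < ε := by
          rw [hε]
          apply div_pos (by linarith)
          positivity
        obtain ⟨x, hx⟩ := hfeas ε hεpos
        have := hx c hc
        rw [h1, h2] at this
        have h3 : 0 ≤ c.2.2.1 + c.2.2.2 * ε := by linarith
        rw [hε] at h3
        have h4 : (0:ℝ) < c.2.2.2 + 1 := by positivity
        rw [div_eq_mul_inv] at h3
        have h5 : c.2.2.1 * (c.2.2.2 + 1) + c.2.2.2 * (-c.2.2.1) ≥ 0 := by
          have := mul_le_mul_of_nonneg_right h3 (le_of_lt h4)
          field_simp at this ⊢
          nlinarith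
        nlinarith
      -- feasibility of the eliminated system for all ε
      have hfeas' : ∀ ε > (0:ℝ), ∃ x : V → ℝ, FMSat x ε (FMelim v LL) := by
        intro ε hε
        obtain ⟨x, hx⟩ := hfeas ε hε
        exact ⟨x, FMelim_sound hx⟩
      have hcard' : (FMocc (FMelim v LL)).card ≤ N := by
        have h1 := Finset.card_le_card (FMelim_occ (v := v) (L := LL))
        have h2 : ((FMocc LL).erase v).card < (FMocc LL).card :=
          Finset.card_erase_lt_of_mem hvocc
        omega
      obtain ⟨x0, hx0⟩ := ih (FMelim v LL) hcard' hfeas'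
      exact FMelim_complete hloops0 hx0

end FM

section WTAux
open Finset

lemma wt_coe_untop' {a : WithTop ℝ} (h : a ≠ ⊤) : (↑(a.untopD 0) : WithTop ℝ) = a := by
  induction a with
  | top => exact absurd rfl h
  | coe r => rfl

lemma wt_add_ne_top {a b : WithTop ℝ} (ha : a ≠ ⊤) (hb : b ≠ ⊤) : a + b ≠ ⊤ := by
  intro h
  rcases WithTop.add_eq_top.mp h with h | h
  · exact ha h
  · exact hb h

lemma finset_inf_add_right {ι : Type*} (s : Finset ι) (f : ι → WithTop ℝ) (c : WithTop ℝ) :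
    s.inf f + c = s.inf (fun j => f j + c) := by
  classical
  induction s using Finset.induction_on with
  | empty => simp
  | insert a s h ih =>
      rw [Finset.inf_insert, Finset.inf_insert, ← ih, ← min_add_add_right]

lemma finset_inf_add_left {ι : Type*} (s : Finset ι) (f : ι → WithTop ℝ) (c : WithTop ℝ) :
    c + s.inf f = s.inf (fun j => c + f j) := by
  rw [add_comm, finset_inf_add_right]
  simp_rw [add_comm]

lemma finset_inf_min {ι : Type*} (s : Finset ι) (f g : ι → WithTop ℝ) :
    s.inf (fun j => min (f j) (g j)) = min (s.inf f) (s.inf g) := by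
  apply le_antisymm
  · exact le_min (Finset.inf_mono_fun fun j _ => min_le_left _ _)
      (Finset.inf_mono_fun fun j _ => min_le_right _ _)
  · refine Finset.le_inf fun j hj => ?_
    exact min_le_min (Finset.inf_le hj) (Finset.inf_le hj)

lemma minPlusMul_min {m n : ℕ} (C : Fin n → Fin m → WithTop ℝ) (y y' : Fin m → WithTop ℝ)
    (j : Fin n) :
    minPlusMul C (fun i => min (y i) (y' i)) j = min (minPlusMul C y j) (minPlusMul C y' j) := by
  unfold minPlusMul
  rw [← finset_inf_min]
  congr 1
  funext i
  show C j i + min (y i) (y' i) = min (C j i + y i) (C j i + y' i)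
  rcases le_total (y i) (y' i) with h | h
  · rw [min_eq_left h, min_eq_left (add_le_add_right h _)]
  · rw [min_eq_right h, min_eq_right (add_le_add_right h _)]

lemma minPlusMul_top {m n : ℕ} (C : Fin n → Fin m → WithTop ℝ) (j : Fin n) :
    minPlusMul C (fun _ => (⊤ : WithTop ℝ)) j = ⊤ := by
  unfold minPlusMul
  refine le_antisymm le_top (Finset.le_inf fun i _ => ?_)
  simp

/-- the Fubini swap for min-plus. -/
lemma minplus_swap {m n : ℕ} (C : Fin m → Fin n → WithTop ℝ)
    (y : Fin m → WithTop ℝ) (x : Fin n → WithTop ℝ) :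
    (Finset.univ.inf fun j => (Finset.univ.inf fun i => C i j + y i) + x j)
      = Finset.univ.inf fun i => y i + (Finset.univ.inf fun j => C i j + x j) := by
  have lhs : (Finset.univ.inf fun j => (Finset.univ.inf fun i => C i j + y i) + x j)
      = Finset.univ.inf fun j => Finset.univ.inf fun i => (C i j + y i) + x j := by
    refine Finset.inf_congr rfl fun j _ => ?_
    rw [finset_inf_add_right]
  have rhs : (Finset.univ.inf fun i => y i + (Finset.univ.inf fun j => C i j + x j))
      = Finset.univ.inf fun i => Finset.univ.inf fun j => (C i j + y i) + x j := by
    refine Finset.inf_congr rfl fun i _ => ?_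
    rw [finset_inf_add_left]
    refine Finset.inf_congr rfl fun j _ => ?_
    rw [← add_assoc, add_comm (y i) (C i j)]
  rw [lhs, rhs]
  exact Finset.inf_comm _ _ _

lemma ltVec_min {m n : ℕ} (A B : Fin m → Fin n → WithTop ℝ) (y y' : Fin m → WithTop ℝ)
    (h : ltVec (minPlusMul (fun j i => B i j) y) (minPlusMul (fun j i => A i j) y))
    (h' : ltVec (minPlusMul (fun j i => B i j) y') (minPlusMul (fun j i => A i j) y')) :
    ltVec (minPlusMul (fun j i => B i j) (fun i => min (y i) (y' i)))
      (minPlusMul (fun j i => A i j) (fun i => min (y i) (y' i))) := by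
  intro j
  rw [minPlusMul_min, minPlusMul_min]
  rcases h j with ⟨hu, hv⟩ | hlt <;> rcases h' j with ⟨hu', hv'⟩ | hlt'
  · left; rw [hu, hu', hv, hv']; simp
  · right
    rw [hu, hv]
    simpa using hlt'
  · right
    rw [hu', hv']
    simpa using hlt
  · right
    rcases le_total (minPlusMul (fun j i => B i j) y j) (minPlusMul (fun j i => B i j) y' j)
      with hle | hle
    · rw [min_eq_left hle]
      exact lt_min hlt (lt_of_le_of_lt hle hlt')
    · rw [min_eq_right hle]
      exact lt_min (lt_of_le_of_lt hle hlt) hlt'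
end WTAux

noncomputable section DichotomySetup
open scoped Classical
open Finset

variable {m n : ℕ}

/-- real part of a matrix entry. -/
def arr {m n : ℕ} (A : Fin m → Fin n → WithTop ℝ) (i : Fin m) (j : Fin n) : ℝ :=
  (A i j).untopD 0

def MfinS {m n : ℕ} (B : Fin m → Fin n → WithTop ℝ) (k : Fin n) : Finset (Fin m) :=
  Finset.univ.filter (fun i => B i k ≠ ⊤)

def NfinS {m n : ℕ} (A : Fin m → Fin n → WithTop ℝ) (i : Fin m) : Finset (Fin n) :=
  Finset.univ.filter (fun j => A i j ≠ ⊤)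

lemma mem_MfinS {B : Fin m → Fin n → WithTop ℝ} {i : Fin m} {k : Fin n} :
    i ∈ MfinS B k ↔ B i k ≠ ⊤ := by
  simp [MfinS]

lemma mem_NfinS {A : Fin m → Fin n → WithTop ℝ} {i : Fin m} {j : Fin n} :
    j ∈ NfinS A i ↔ A i j ≠ ⊤ := by
  simp [NfinS]

/-- primal limit energy. -/
def muP {m n : ℕ} (A B : Fin m → Fin n → WithTop ℝ) : Fin n → ENNReal :=
  MVal (fun k => MfinS B k) (fun i => NfinS A i)
    (fun k i => -(arr B i k)) (fun i j => arr A i j)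

lemma muP_step {A B : Fin m → Fin n → WithTop ℝ} {k : Fin n} {i : Fin m}
    (hk : muP A B k ≠ ⊤) (hi : i ∈ MfinS B k) :
    ∃ j ∈ NfinS A i, muP A B j ≠ ⊤ ∧
      (muP A B j).toReal + arr A i j ≤ (muP A B k).toReal + arr B i k := by
  obtain ⟨j, hj, hne, hle⟩ := MVal_step (fun k => MfinS B k) (fun i => NfinS A i)
    (fun k i => -(arr B i k)) (fun i j => arr A i j) hk hi
  exact ⟨j, hj, hne, by unfold muP; linarith [hle]⟩

def UstarS {m n : ℕ} (A B : Fin m → Fin n → WithTop ℝ) : Finset (Fin m) :=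
  Finset.univ.filter (fun i => ∀ j ∈ NfinS A i, muP A B j = ⊤)

lemma mem_UstarS {A B : Fin m → Fin n → WithTop ℝ} {i : Fin m} :
    i ∈ UstarS A B ↔ ∀ j ∈ NfinS A i, muP A B j = ⊤ := by
  simp [UstarS]

lemma hatM_nonempty {A B : Fin m → Fin n → WithTop ℝ} {k : Fin n} (hk : muP A B k = ⊤) :
    (MfinS B k ∩ UstarS A B).Nonempty := by
  by_contra hcon
  rw [Finset.not_nonempty_iff_eq_empty] at hcon
  apply absurd hk
  apply MVal_ne_top
  intro i hi
  have hiU : i ∉ UstarS A B := by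
    intro hU
    have : i ∈ MfinS B k ∩ UstarS A B := Finset.mem_inter.mpr ⟨hi, hU⟩
    rw [hcon] at this
    exact absurd this (Finset.notMem_empty i)
  rw [mem_UstarS] at hiU
  push_neg at hiU
  obtain ⟨j, hj, hne⟩ := hiU
  exact ⟨j, hj, hne⟩

/-- dual limit energy with strictness margin ε. -/
def nuD {m n : ℕ} (A B : Fin m → Fin n → WithTop ℝ) (ε : ℝ) : Fin m → ENNReal :=
  MVal (fun i => if i ∈ UstarS A B then NfinS A i else ∅)
    (fun j => MfinS B j ∩ UstarS A B)
    (fun i j => ε - arr A i j)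
    (fun j i' => arr B i' j)

lemma nuD_hR {A B : Fin m → Fin n → WithTop ℝ} :
    ∀ p : Fin m, ∀ q ∈ (if p ∈ UstarS A B then NfinS A p else ∅),
      (MfinS B q ∩ UstarS A B).Nonempty := by
  intro p q hq
  by_cases hp : p ∈ UstarS A B
  · rw [if_pos hp] at hq
    exact hatM_nonempty ((mem_UstarS.mp hp) q hq)
  · rw [if_neg hp] at hq
    exact absurd hq (Finset.notMem_empty q)

lemma nuD_step {A B : Fin m → Fin n → WithTop ℝ} {ε : ℝ} {i : Fin m} {j : Fin n}
    (hUi : i ∈ UstarS A B) (hνi : nuD A B ε i ≠ ⊤) (hj : j ∈ NfinS A i) :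
    ∃ i' ∈ MfinS B j ∩ UstarS A B, nuD A B ε i' ≠ ⊤ ∧
      (nuD A B ε i').toReal + arr B i' j + ε ≤ (nuD A B ε i).toReal + arr A i j := by
  have hj' : j ∈ (if i ∈ UstarS A B then NfinS A i else ∅) := by rw [if_pos hUi]; exact hj
  obtain ⟨i', hi', hne, hle⟩ := MVal_step _ _ _ _ hνi hj'
  exact ⟨i', hi', hne, by unfold nuD; linarith [hle]⟩

/-- relaxed certificates. -/
def RelCertS {m n : ℕ} (A B : Fin m → Fin n → WithTop ℝ) (k₀ : Fin n) (ε : ℝ) : Prop :=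
  ∃ T : Finset (Fin n), k₀ ∈ T ∧ ∃ x : Fin n → ℝ, ∀ k ∈ T, ∀ i ∈ MfinS B k,
    ∃ j, j ∈ T ∧ j ∈ NfinS A i ∧ x j + arr A i j ≤ x k + arr B i k + ε

/-- an exact relaxed certificate gives a genuine solution. -/
lemma relcert_to_P {A B : Fin m → Fin n → WithTop ℝ} {k₀ : Fin n}
    (h : RelCertS A B k₀ 0) :
    ∃ X : Fin n → WithTop ℝ, (∀ i, minPlusMul A X i ≤ minPlusMul B X i) ∧ X k₀ ≠ ⊤ := by
  classical
  obtain ⟨T, hk₀, x, hx⟩ := h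
  refine ⟨fun j => if j ∈ T then ((x j : ℝ) : WithTop ℝ) else ⊤, ?_, by simp [hk₀]⟩
  intro i
  unfold minPlusMul
  refine Finset.le_inf fun k _ => ?_
  by_cases hkT : k ∈ T
  · by_cases hBik : B i k = ⊤
    · rw [hBik]; simp
    · obtain ⟨j, hjT, hjN, hle⟩ := hx k hkT i (mem_MfinS.mpr hBik)
      refine le_trans (Finset.inf_le (Finset.mem_univ j)) ?_
      show A i j + (if j ∈ T then ((x j : ℝ) : WithTop ℝ) else ⊤)
        ≤ B i k + (if k ∈ T then ((x k : ℝ) : WithTop ℝ) else ⊤)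
      rw [if_pos hjT, if_pos hkT]
      rw [← wt_coe_untop' (mem_NfinS.mp hjN), ← wt_coe_untop' hBik]
      rw [← WithTop.coe_add, ← WithTop.coe_add, WithTop.coe_le_coe]
      show arr A i j + x j ≤ arr B i k + x k
      linarith
  · show _ ≤ B i k + (if k ∈ T then ((x k : ℝ) : WithTop ℝ) else ⊤)
    rw [if_neg hkT]
    simp

end DichotomySetup

noncomputable section LimSection
open scoped Classical
open Finset

lemma relcert_limit {m n : ℕ} (A B : Fin m → Fin n → WithTop ℝ) (k₀ : Fin n)
    (h : ∀ ε > (0:ℝ), RelCertS A B k₀ ε) : RelCertS A B k₀ 0 := by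
  classical
  have hc : ∀ t : ℕ, RelCertS A B k₀ (1/((t:ℝ)+1)) := fun t => h _ (by positivity)
  choose Tt hTt xt hxt using hc
  set σt : ℕ → Fin n × Fin m → Fin n := fun t ki =>
    if hcond : ki.1 ∈ Tt t ∧ ki.2 ∈ MfinS B ki.1 then
      Classical.choose (hxt t ki.1 hcond.1 ki.2 hcond.2) else k₀ with hσt
  have hσprop : ∀ (t : ℕ) (k : Fin n) (i : Fin m) (hk : k ∈ Tt t) (hi : i ∈ MfinS B k),
      σt t (k,i) ∈ Tt t ∧ σt t (k,i) ∈ NfinS A i ∧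
      xt t (σt t (k,i)) + arr A i (σt t (k,i)) ≤ xt t k + arr B i k + 1/((t:ℝ)+1) := by
    intro t k i hk hi
    have hcond : ((k,i) : Fin n × Fin m).1 ∈ Tt t ∧ ((k,i) : Fin n × Fin m).2 ∈ MfinS B ((k,i) : Fin n × Fin m).1 := ⟨hk, hi⟩
    have : σt t (k,i) = Classical.choose (hxt t k hk i hi) := by
      rw [hσt]
      simp only [dif_pos hcond]
    rw [this]
    obtain ⟨h1, h2, h3⟩ := Classical.choose_spec (hxt t k hk i hi)
    exact ⟨h1, h2, h3⟩
  have : Nonempty (Finset (Fin n) × (Fin n × Fin m → Fin n)) := ⟨(∅, fun _ => k₀)⟩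
  obtain ⟨⟨T, σ⟩, hfreq⟩ := exists_frequently (fun t => (Tt t, σt t))
  set L : List (Fin n × Fin n × ℝ × ℕ) :=
    T.toList.flatMap (fun k => ((MfinS B k).toList.map (fun i =>
      (k, σ (k,i), arr B i k - arr A i (σ (k,i)), 1)))) with hL
  have hmemL : ∀ k ∈ T, ∀ i ∈ MfinS B k,
      (k, σ (k,i), arr B i k - arr A i (σ (k,i)), 1) ∈ L := by
    intro k hk i hi
    rw [hL, List.mem_flatMap]
    exact ⟨k, Finset.mem_toList.mpr hk, List.mem_map.mpr ⟨i, Finset.mem_toList.mpr hi, rfl⟩⟩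
  have hmemL' : ∀ c ∈ L, ∃ k i, k ∈ T ∧ i ∈ MfinS B k ∧
      c = (k, σ (k,i), arr B i k - arr A i (σ (k,i)), 1) := by
    intro c hc
    rw [hL, List.mem_flatMap] at hc
    obtain ⟨k, hk, hc⟩ := hc
    rw [List.mem_map] at hc
    obtain ⟨i, hi, rfl⟩ := hc
    exact ⟨k, i, Finset.mem_toList.mp hk, Finset.mem_toList.mp hi, rfl⟩
  have hFM : ∀ ε > (0:ℝ), ∃ x : Fin n → ℝ, FMSat x ε L := by
    intro ε hε
    obtain ⟨N, hN⟩ := exists_nat_gt (1/ε)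
    obtain ⟨t, htN, hteq⟩ := hfreq N
    have hTeq : Tt t = T := congrArg Prod.fst hteq
    have hσeq : σt t = σ := congrArg Prod.snd hteq
    have hεt : 1/((t:ℝ)+1) ≤ ε := by
      rw [div_le_iff₀ (by positivity)]
      have h1 : (1:ℝ)/ε < (N:ℝ) := hN
      have h2 : (N:ℝ) ≤ (t:ℝ) + 1 := by
        have : (N:ℝ) ≤ (t:ℝ) := by exact_mod_cast htN
        linarith
      have h3 : (1:ℝ)/ε < (t:ℝ)+1 := lt_of_lt_of_le h1 h2
      rw [div_lt_iff₀ hε] at h3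
      nlinarith
    refine ⟨xt t, ?_⟩
    intro c hc
    obtain ⟨k, i, hk, hi, rfl⟩ := hmemL' c hc
    obtain ⟨h1, h2, h3⟩ := hσprop t k i (hTeq ▸ hk) hi
    rw [hσeq] at h3
    show xt t (σ (k,i)) ≤ xt t k + (arr B i k - arr A i (σ (k,i))) + (1:ℕ) * ε
    push_cast
    linarith
  obtain ⟨x0, hx0⟩ := FM_limit L hFM
  obtain ⟨t₀, _, ht₀⟩ := hfreq 0
  have hTeq0 : Tt t₀ = T := congrArg Prod.fst ht₀
  have hσeq0 : σt t₀ = σ := congrArg Prod.snd ht₀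
  refine ⟨T, hTeq0 ▸ hTt t₀, x0, ?_⟩
  intro k hk i hi
  obtain ⟨h1, h2, _⟩ := hσprop t₀ k i (hTeq0 ▸ hk) hi
  rw [hσeq0] at h1 h2
  have := hx0 _ (hmemL k hk i hi)
  simp only at this
  refine ⟨σ (k,i), hTeq0 ▸ h1, h2, ?_⟩
  push_cast at this
  linarith

end LimSection

noncomputable section DichotomyMain
open scoped Classical
open Finset

lemma dichotomy {m n : ℕ} (hm : 0 < m) (hn : 0 < n) (A B : Fin m → Fin n → WithTop ℝ)
    (k₀ : Fin n) :
    (∃ X : Fin n → WithTop ℝ, (∀ i, minPlusMul A X i ≤ minPlusMul B X i) ∧ X k₀ ≠ ⊤) ∨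
    (∃ y : Fin m → WithTop ℝ,
        ltVec (minPlusMul (fun j i => B i j) y) (minPlusMul (fun j i => A i j) y) ∧
        minPlusMul (fun j i => B i j) y k₀ ≠ ⊤) := by
  classical
  by_cases hμ : muP A B k₀ = ⊤
  case neg =>
    left
    apply relcert_to_P (k₀ := k₀)
    refine ⟨Finset.univ.filter (fun k => muP A B k ≠ ⊤),
      Finset.mem_filter.mpr ⟨Finset.mem_univ _, hμ⟩, fun k => (muP A B k).toReal, ?_⟩
    intro k hk i hi
    rw [Finset.mem_filter] at hk
    obtain ⟨j, hj, hjne, hle⟩ := muP_step hk.2 hi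
    exact ⟨j, Finset.mem_filter.mpr ⟨Finset.mem_univ j, hjne⟩, hj, by linarith⟩
  case pos =>
  by_cases hlim : ∀ ε > (0:ℝ), RelCertS A B k₀ ε
  · left
    exact relcert_to_P (relcert_limit A B k₀ hlim)
  · push_neg at hlim
    obtain ⟨ε, hε, hnocert⟩ := hlim
    by_cases hcov : ∃ i ∈ MfinS B k₀ ∩ UstarS A B, nuD A B ε i ≠ ⊤
    · -- case (i) : dual certificate exists
      right
      obtain ⟨i₀, hi₀, hνi₀⟩ := hcov
      rw [Finset.mem_inter] at hi₀
      set y : Fin m → WithTop ℝ := fun i =>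
        if i ∈ UstarS A B ∧ nuD A B ε i ≠ ⊤ then (((nuD A B ε i).toReal : ℝ) : WithTop ℝ)
        else ⊤ with hy
      have hyfin : ∀ i, y i ≠ ⊤ → i ∈ UstarS A B ∧ nuD A B ε i ≠ ⊤ := by
        intro i hi
        by_contra hcon
        apply hi
        rw [hy]
        simp only [if_neg hcon]
      have hyval : ∀ i (h : i ∈ UstarS A B ∧ nuD A B ε i ≠ ⊤),
          y i = (((nuD A B ε i).toReal : ℝ) : WithTop ℝ) := by
        intro i h
        rw [hy]
        simp only [if_pos h]
      refine ⟨y, ?_, ?_⟩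
      · -- ltVec
        intro j
        by_cases hv : minPlusMul (fun j i => A i j) y j = ⊤
        · by_cases hu : minPlusMul (fun j i => B i j) y j = ⊤
          · exact Or.inl ⟨hu, hv⟩
          · exact Or.inr (hv ▸ Ne.lt_top hu)
        · right
          have huniv : (Finset.univ : Finset (Fin m)).Nonempty :=
            ⟨⟨0, hm⟩, Finset.mem_univ _⟩
          obtain ⟨i, _, hieq⟩ := Finset.exists_mem_eq_inf Finset.univ huniv
            (fun i => A i j + y i)
          have hvij : minPlusMul (fun j i => A i j) y j = A i j + y i := hieq
          have hAy : A i j ≠ ⊤ ∧ y i ≠ ⊤ := by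
            constructor
            · intro hh; apply hv; rw [hvij, hh]; simp
            · intro hh; apply hv; rw [hvij, hh]; simp
          obtain ⟨hiU, hiν⟩ := hyfin i hAy.2
          obtain ⟨i', hi'mem, hν', hle⟩ := nuD_step hiU hiν (mem_NfinS.mpr hAy.1)
          rw [Finset.mem_inter] at hi'mem
          have hBi' : B i' j ≠ ⊤ := mem_MfinS.mp hi'mem.1
          have h1 : minPlusMul (fun j i => B i j) y j ≤ B i' j + y i' :=
            Finset.inf_le (Finset.mem_univ i')
          have h2 : B i' j + y i' = ((arr B i' j + (nuD A B ε i').toReal : ℝ) : WithTop ℝ) := by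
            rw [hyval i' ⟨hi'mem.2, hν'⟩, ← wt_coe_untop' hBi', ← WithTop.coe_add]
            rfl
          have h3 : A i j + y i = ((arr A i j + (nuD A B ε i).toReal : ℝ) : WithTop ℝ) := by
            rw [hyval i ⟨hiU, hiν⟩, ← wt_coe_untop' hAy.1, ← WithTop.coe_add]
            rfl
          rw [hvij, h3]
          refine lt_of_le_of_lt (h1.trans (le_of_eq h2)) ?_
          rw [WithTop.coe_lt_coe]
          linarith
      · -- coverage at k₀
        have h1 : minPlusMul (fun j i => B i j) y k₀ ≤ B i₀ k₀ + y i₀ :=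
          Finset.inf_le (Finset.mem_univ i₀)
        have hBi₀ : B i₀ k₀ ≠ ⊤ := mem_MfinS.mp hi₀.1
        have h2 : B i₀ k₀ + y i₀ ≠ ⊤ := by
          rw [hyval i₀ ⟨hi₀.2, hνi₀⟩]
          exact wt_add_ne_top hBi₀ (by simp)
        exact ne_top_of_le_ne_top h2 h1
    · -- case (ii) : build a relaxed certificate, contradiction
      exfalso
      push_neg at hcov
      obtain ⟨xg, hxg⟩ := MVal_divergence_cert
        (fun i => if i ∈ UstarS A B then NfinS A i else ∅)
        (fun j => MfinS B j ∩ UstarS A B)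
        (fun i j => ε - arr A i j)
        (fun j i' => arr B i' j)
        nuD_hR
      have hGoodIff : ∀ q, GoodMv (fun i => if i ∈ UstarS A B then NfinS A i else ∅)
          (fun j => MfinS B j ∩ UstarS A B) (fun i j => ε - arr A i j)
          (fun j i' => arr B i' j) q ↔
          ((MfinS B q ∩ UstarS A B).Nonempty ∧
            ∀ r ∈ MfinS B q ∩ UstarS A B, nuD A B ε r = ⊤) := fun q => Iff.rfl
      set S1 : ℝ := ∑ j : Fin n, |(muP A B j).toReal| with hS1
      set S2 : ℝ := ∑ p : Fin m × Fin n, |arr A p.1 p.2| with hS2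
      set S3 : ℝ := ∑ p : Fin m × Fin n, |arr B p.1 p.2| with hS3
      set S4 : ℝ := ∑ k : Fin n, |xg k| with hS4
      set Rb : ℝ := S1 + S2 + S3 + S4 with hRb
      have hS1n : 0 ≤ S1 := Finset.sum_nonneg fun _ _ => abs_nonneg _
      have hS2n : 0 ≤ S2 := Finset.sum_nonneg fun _ _ => abs_nonneg _
      have hS3n : 0 ≤ S3 := Finset.sum_nonneg fun _ _ => abs_nonneg _
      have hS4n : 0 ≤ S4 := Finset.sum_nonneg fun _ _ => abs_nonneg _
      have hb1 : ∀ j, |(muP A B j).toReal| ≤ Rb := by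
        intro j
        have h := Finset.single_le_sum (f := fun j : Fin n => |(muP A B j).toReal|)
          (fun _ _ => abs_nonneg _) (Finset.mem_univ j)
        rw [← hS1] at h
        rw [hRb]; linarith
      have hb2 : ∀ i j, |arr A i j| ≤ Rb := by
        intro i j
        have h := Finset.single_le_sum (f := fun p : Fin m × Fin n => |arr A p.1 p.2|)
          (fun _ _ => abs_nonneg _) (Finset.mem_univ (i, j))
        simp only at h
        rw [← hS2] at h
        rw [hRb]; linarith
      have hb3 : ∀ i j, |arr B i j| ≤ Rb := by
        intro i j
        have h := Finset.single_le_sum (f := fun p : Fin m × Fin n => |arr B p.1 p.2|)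
          (fun _ _ => abs_nonneg _) (Finset.mem_univ (i, j))
        simp only at h
        rw [← hS3] at h
        rw [hRb]; linarith
      have hb4 : ∀ k, |xg k| ≤ Rb := by
        intro k
        have h := Finset.single_le_sum (f := fun k : Fin n => |xg k|)
          (fun _ _ => abs_nonneg _) (Finset.mem_univ k)
        rw [← hS4] at h
        rw [hRb]; linarith
      set cc : ℝ := -(1 + 4 * Rb) with hcc
      apply hnocert
      set TG : Finset (Fin n) := Finset.univ.filter (fun q =>
        (MfinS B q ∩ UstarS A B).Nonempty ∧
          ∀ r ∈ MfinS B q ∩ UstarS A B, nuD A B ε r = ⊤) with hTG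
      set FF : Finset (Fin n) := Finset.univ.filter (fun j => muP A B j ≠ ⊤) with hFF
      have hk₀TG : k₀ ∈ TG := by
        rw [hTG, Finset.mem_filter]
        exact ⟨Finset.mem_univ _, hatM_nonempty hμ, fun r hr => hcov r hr⟩
      refine ⟨TG ∪ FF, Finset.mem_union_left _ hk₀TG,
        fun k => if muP A B k ≠ ⊤ then (muP A B k).toReal + cc else xg k, ?_⟩
      intro k hk i hi
      by_cases hkF : muP A B k ≠ ⊤
      · -- k in the finite region
        obtain ⟨j, hj, hjne, hle⟩ := muP_step hkF hi
        refine ⟨j, Finset.mem_union_right _ (Finset.mem_filter.mpr ⟨Finset.mem_univ _, hjne⟩),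
          hj, ?_⟩
        dsimp only
        rw [if_pos hjne, if_pos hkF]
        linarith
      · -- k in the divergent region, so k ∈ TG
        push_neg at hkF
        have hkTG : k ∈ TG := by
          rcases Finset.mem_union.mp hk with h | h
          · exact h
          · rw [hFF, Finset.mem_filter] at h
            exact absurd hkF h.2
        rw [hTG, Finset.mem_filter] at hkTG
        by_cases hiU : i ∈ UstarS A B
        · -- use the divergence certificate
          have hGood : GoodMv (fun i => if i ∈ UstarS A B then NfinS A i else ∅)
              (fun j => MfinS B j ∩ UstarS A B) (fun i j => ε - arr A i j)
              (fun j i' => arr B i' j) k := (hGoodIff k).mpr hkTG.2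
          obtain ⟨q', hq'mv, hq'good, hq'le⟩ := hxg k hGood i (Finset.mem_inter.mpr ⟨hi, hiU⟩)
          rw [if_pos hiU] at hq'mv
          have hμq' : muP A B q' = ⊤ := (mem_UstarS.mp hiU) q' hq'mv
          refine ⟨q', Finset.mem_union_left _ ?_, hq'mv, ?_⟩
          · rw [hTG, Finset.mem_filter]
            exact ⟨Finset.mem_univ _, (hGoodIff q').mp hq'good⟩
          · dsimp only
            rw [if_neg (not_not.mpr hμq'), if_neg (not_not.mpr hkF)]
            linarith [hq'le]
        · -- escape through the finite region
          rw [mem_UstarS] at hiU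
          push_neg at hiU
          obtain ⟨j₀, hj₀, hμj₀⟩ := hiU
          refine ⟨j₀, Finset.mem_union_right _ (Finset.mem_filter.mpr ⟨Finset.mem_univ _, hμj₀⟩),
            hj₀, ?_⟩
          dsimp only
          rw [if_pos hμj₀, if_neg (not_not.mpr hkF)]
          have h1 := hb1 j₀
          have h2 := hb2 i j₀
          have h3 := hb3 i k
          have h4 := hb4 k
          rw [abs_le] at h1 h2 h3 h4
          rw [hcc]
          linarith

end DichotomyMain

noncomputable section MainAssembly
open scoped Classical
open Finset

lemma not_both {m n : ℕ} (hm : 0 < m) (hn : 0 < n) (A B : Fin m → Fin n → WithTop ℝ)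
    (S : Set (Fin n))
    (h1 : ∃ x : Fin n → WithTop ℝ,
        (∀ i : Fin m, minPlusMul A x i ≤ minPlusMul B x i) ∧ ∃ i ∈ S, x i ≠ ⊤)
    (h2 : ∃ y : Fin m → WithTop ℝ,
        ltVec (minPlusMul (fun j i => B i j) y) (minPlusMul (fun j i => A i j) y) ∧
        ∀ i ∈ S, minPlusMul (fun j i => B i j) y i ≠ ⊤) : False := by
  obtain ⟨x, hx, i₀, hi₀S, hi₀⟩ := h1
  obtain ⟨y, hlt, hfin⟩ := h2
  have hcne : (Finset.univ.inf fun j => minPlusMul (fun j i => B i j) y j + x j) ≠ ⊤ :=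
    ne_top_of_le_ne_top (wt_add_ne_top (hfin i₀ hi₀S) hi₀)
      (Finset.inf_le (Finset.mem_univ i₀))
  have eA : (Finset.univ.inf fun j => minPlusMul (fun j i => A i j) y j + x j)
      = Finset.univ.inf fun i => y i + minPlusMul A x i := minplus_swap A y x
  have eB : (Finset.univ.inf fun j => minPlusMul (fun j i => B i j) y j + x j)
      = Finset.univ.inf fun i => y i + minPlusMul B x i := minplus_swap B y x
  have hac : (Finset.univ.inf fun j => minPlusMul (fun j i => A i j) y j + x j)
      ≤ Finset.univ.inf fun j => minPlusMul (fun j i => B i j) y j + x j := by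
    rw [eA, eB]
    exact Finset.inf_mono_fun fun i _ => add_le_add_right (hx i) _
  have hca : (Finset.univ.inf fun j => minPlusMul (fun j i => B i j) y j + x j)
      < Finset.univ.inf fun j => minPlusMul (fun j i => A i j) y j + x j := by
    rw [Finset.lt_inf_iff (Ne.lt_top hcne)]
    intro j _
    by_cases hxj : x j = ⊤
    · rw [hxj, add_top]
      exact Ne.lt_top hcne
    rcases hlt j with ⟨huj, hvj⟩ | hltj
    · rw [hvj, top_add]
      exact Ne.lt_top hcne
    · by_cases hvj : minPlusMul (fun j i => A i j) y j = ⊤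
      · rw [hvj, top_add]
        exact Ne.lt_top hcne
      · refine lt_of_le_of_lt (Finset.inf_le (Finset.mem_univ j)) ?_
        have hune : minPlusMul (fun j i => B i j) y j ≠ ⊤ := ne_top_of_lt hltj
        have h1 := hltj
        rw [← wt_coe_untop' hune, ← wt_coe_untop' hvj, WithTop.coe_lt_coe] at h1
        rw [← wt_coe_untop' hune, ← wt_coe_untop' hvj, ← wt_coe_untop' hxj,
          ← WithTop.coe_add, ← WithTop.coe_add, WithTop.coe_lt_coe]
        linarith
  exact lt_irrefl _ (lt_of_lt_of_le hca hac)

lemma combine_certs {m n : ℕ} (A B : Fin m → Fin n → WithTop ℝ) (s : Finset (Fin n))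
    (h : ∀ k ∈ s, ∃ y : Fin m → WithTop ℝ,
        ltVec (minPlusMul (fun j i => B i j) y) (minPlusMul (fun j i => A i j) y) ∧
        minPlusMul (fun j i => B i j) y k ≠ ⊤) :
    ∃ y : Fin m → WithTop ℝ,
        ltVec (minPlusMul (fun j i => B i j) y) (minPlusMul (fun j i => A i j) y) ∧
        ∀ k ∈ s, minPlusMul (fun j i => B i j) y k ≠ ⊤ := by
  classical
  induction s using Finset.induction_on with
  | empty =>
      refine ⟨fun _ => ⊤, ?_, by simp⟩
      intro j
      exact Or.inl ⟨minPlusMul_top _ _, minPlusMul_top _ _⟩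
  | @insert a s ha ih =>
      obtain ⟨y1, hy1, hy1a⟩ := h a (Finset.mem_insert_self a s)
      obtain ⟨y2, hy2, hy2s⟩ := ih (fun k hk => h k (Finset.mem_insert_of_mem hk))
      refine ⟨fun i => min (y1 i) (y2 i), ltVec_min A B y1 y2 hy1 hy2, ?_⟩
      intro k hk
      rw [minPlusMul_min]
      rcases Finset.mem_insert.mp hk with rfl | hk
      · exact ne_top_of_le_ne_top hy1a (min_le_left _ _)
      · exact ne_top_of_le_ne_top (hy2s k hk) (min_le_right _ _)

end MainAssembly


/-- **Min-plus linear duality (second form)** : for matrices `A, B` over `ℝ∞` and a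
subset `S` of columns, exactly one of the following holds: (1) there is a solution of
`A ⊙ x ≤ B ⊙ x` with `x_i` finite for some `i ∈ S`; (2) there is a solution of
`Bᵀ ⊙ y < Aᵀ ⊙ y` such that the `i`-th coordinate of `Bᵀ ⊙ y` is finite for every
`i ∈ S`. -/
theorem minplus_linear_duality_exists (m n : ℕ) (hm : 0 < m) (hn : 0 < n)
    (A B : Fin m → Fin n → WithTop ℝ) (S : Set (Fin n)) :
    Xor'
      (∃ x : Fin n → WithTop ℝ,
        (∀ i : Fin m, minPlusMul A x i ≤ minPlusMul B x i) ∧ ∃ i ∈ S, x i ≠ ⊤)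
      (∃ y : Fin m → WithTop ℝ,
        ltVec (minPlusMul (fun j i => B i j) y) (minPlusMul (fun j i => A i j) y) ∧
        ∀ i ∈ S, minPlusMul (fun j i => B i j) y i ≠ ⊤) := by
  classical
  have hnb : ¬((∃ x : Fin n → WithTop ℝ,
        (∀ i : Fin m, minPlusMul A x i ≤ minPlusMul B x i) ∧ ∃ i ∈ S, x i ≠ ⊤) ∧
      (∃ y : Fin m → WithTop ℝ,
        ltVec (minPlusMul (fun j i => B i j) y) (minPlusMul (fun j i => A i j) y) ∧
        ∀ i ∈ S, minPlusMul (fun j i => B i j) y i ≠ ⊤)) :=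
    fun ⟨hh1, hh2⟩ => not_both hm hn A B S hh1 hh2
  have hor : (∃ x : Fin n → WithTop ℝ,
        (∀ i : Fin m, minPlusMul A x i ≤ minPlusMul B x i) ∧ ∃ i ∈ S, x i ≠ ⊤) ∨
      (∃ y : Fin m → WithTop ℝ,
        ltVec (minPlusMul (fun j i => B i j) y) (minPlusMul (fun j i => A i j) y) ∧
        ∀ i ∈ S, minPlusMul (fun j i => B i j) y i ≠ ⊤) := by
    by_cases hS : ∃ k, k ∈ S
    case neg =>
      right
      refine ⟨fun _ => ⊤, ?_, ?_⟩
      · intro j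
        exact Or.inl ⟨minPlusMul_top _ _, minPlusMul_top _ _⟩
      · intro i hiS
        exact absurd ⟨i, hiS⟩ hS
    case pos =>
      by_cases hP : ∃ k ∈ Finset.univ.filter (· ∈ S), (∃ X : Fin n → WithTop ℝ,
          (∀ i, minPlusMul A X i ≤ minPlusMul B X i) ∧ X k ≠ ⊤)
      · left
        obtain ⟨k, hkSf, X, hX, hXk⟩ := hP
        rw [Finset.mem_filter] at hkSf
        exact ⟨X, hX, k, hkSf.2, hXk⟩
      · push_neg at hP
        have hQall : ∀ k ∈ Finset.univ.filter (· ∈ S), ∃ y : Fin m → WithTop ℝ,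
            ltVec (minPlusMul (fun j i => B i j) y) (minPlusMul (fun j i => A i j) y) ∧
            minPlusMul (fun j i => B i j) y k ≠ ⊤ := by
          intro k hk
          rcases dichotomy hm hn A B k with hL | hR
          · obtain ⟨X, hX1, hX2⟩ := hL
            exact absurd (hP k hk X hX1) hX2
          · exact hR
        obtain ⟨y, hlt, hfin⟩ := combine_certs A B _ hQall
        right
        exact ⟨y, hlt, fun i hiS =>
          hfin i (Finset.mem_filter.mpr ⟨Finset.mem_univ _, hiS⟩)⟩
  rcases hor with h | h
  · exact Or.inl ⟨h, fun h2 => hnb ⟨h, h2⟩⟩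
  · exact Or.inr ⟨h, fun h1 => hnb ⟨h1, h⟩⟩
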